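/- arXiv:1403.4407 — 2 statements merged into one kernel-verified Lean document; each statement's English description precedes it below -/
import Mathlib

section
/- In Fitting's quantified logic of proofs QLP, the Justified Universal Generalization rule is admissible: if QLP_F ⊢ t:A(x), then QLP_F ⊢ (t∀x):(∀x)A(x), for any primitive term specification F. -/
/-- Justification terms of Fitting's quantified logic of proofs QLP:
variables, primitive terms `f(x₁,…,xₙ)` (a function symbol applied to
justification variables), application `·`, sum `+`, proof checker `!`, and
the uniform verifier `(t ∀ x)` (which binds `x`). -/
inductive Tm : Type
  | var : ℕ → Tm
  | prim : ℕ → List ℕ → Tm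
  | app : Tm → Tm → Tm
  | sum : Tm → Tm → Tm
  | bang : Tm → Tm
  | uall : Tm → ℕ → Tm

/-- Free justification variables of a term. -/
def Tm.fv : Tm → Finset ℕ
  | .var x => {x}
  | .prim _ xs => xs.toFinset
  | .app s t => s.fv ∪ t.fv
  | .sum s t => s.fv ∪ t.fv
  | .bang t => t.fv
  | .uall t x => t.fv.erase x

/-- Substitution of a term for a justification variable in a term. -/
def Tm.substT (s : Tm) (x : ℕ) : Tm → Tm
  | .var y => if y = x then s else .var y
  | .prim f xs => .prim f xs
  | .app a b => .app (Tm.substT s x a) (Tm.substT s x b)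
  | .sum a b => .sum (Tm.substT s x a) (Tm.substT s x b)
  | .bang a => .bang (Tm.substT s x a)
  | .uall a y => if y = x then .uall a y else .uall (Tm.substT s x a) y

/-- `FreeForT s x t`: the term `s` is substitutable ("free for") the variable
`x` in the term `t` (no variable of `s` gets captured, and `x` does not occur
inside a primitive term). -/
def FreeForT (s : Tm) (x : ℕ) : Tm → Prop
  | .var _ => True
  | .prim _ xs => x ∉ xs
  | .app a b => FreeForT s x a ∧ FreeForT s x b
  | .sum a b => FreeForT s x a ∧ FreeForT s x b
  | .bang a => FreeForT s x a
  | .uall a y => x ∈ Tm.fv (.uall a y) → (y ∉ s.fv ∧ FreeForT s x a)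

/-- Formulas of QLP, with quantifiers over justification variables. -/
inductive Fm : Type
  | atom : ℕ → Fm
  | delta : Fm
  | bot : Fm
  | imp : Fm → Fm → Fm
  | just : Tm → Fm → Fm
  | all : ℕ → Fm → Fm
  | ex : ℕ → Fm → Fm

namespace Fm

def neg (A : Fm) : Fm := imp A bot
def disj (A B : Fm) : Fm := imp (neg A) B
def conj (A B : Fm) : Fm := neg (imp A (neg B))
def iff' (A B : Fm) : Fm := conj (imp A B) (imp B A)
/-- Exclusive disjunction. -/
def xor' (A B : Fm) : Fm := conj (disj A B) (neg (conj A B))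

/-- Free justification variables of a formula. -/
def fv : Fm → Finset ℕ
  | atom _ => ∅
  | delta => ∅
  | bot => ∅
  | imp A B => A.fv ∪ B.fv
  | just t A => t.fv ∪ A.fv
  | all x A => A.fv.erase x
  | ex x A => A.fv.erase x

/-- Substitution of a term for a justification variable in a formula. -/
def subst (s : Tm) (x : ℕ) : Fm → Fm
  | atom p => atom p
  | delta => delta
  | bot => bot
  | imp A B => imp (A.subst s x) (B.subst s x)
  | just t A => just (Tm.substT s x t) (A.subst s x)
  | all y A => if y = x then all y A else all y (A.subst s x)
  | ex y A => if y = x then ex y A else ex y (A.subst s x)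

end Fm

/-- `FreeFor s x A`: the term `s` is substitutable for the variable `x` in the
formula `A`. -/
def FreeFor (s : Tm) (x : ℕ) : Fm → Prop
  | .atom _ => True
  | .delta => True
  | .bot => True
  | .imp A B => FreeFor s x A ∧ FreeFor s x B
  | .just t A => FreeForT s x t ∧ FreeFor s x A
  | .all y A => x ∈ Fm.fv (.all y A) → (y ∉ s.fv ∧ FreeFor s x A)
  | .ex y A => x ∈ Fm.fv (.ex y A) → (y ∉ s.fv ∧ FreeFor s x A)

open Fm

/-- Provability in Fitting's quantified logic of proofs QLP, extended by the
fixed point axiom `fpAx` and with axiom necessitation restricted to the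
primitive term specification `F`. Axioms: propositional tautologies (via a
Hilbert basis), quantifier axioms Q1–Q4, jK, jT, j4, Sum, and the uniformity
formula UF; rules: modus ponens MP, generalization Gen, axiom necessitation AN,
and quantified necessitation qNec. -/
inductive Prov (F : Fm → Prop) (fpAx : Fm) : Fm → Prop
  | ax1 (A B : Fm) : Prov F fpAx (imp A (imp B A))
  | ax2 (A B C : Fm) : Prov F fpAx (imp (imp A (imp B C)) (imp (imp A B) (imp A C)))
  | ax3 (A B : Fm) : Prov F fpAx (imp (imp (neg A) (neg B)) (imp B A))
  | q1 {t : Tm} {x : ℕ} {A : Fm} (h : FreeFor t x A) :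
      Prov F fpAx (imp (all x A) (A.subst t x))
  | q2 {x : ℕ} {A B : Fm} (h : x ∉ A.fv) :
      Prov F fpAx (imp (all x (imp A B)) (imp A (all x B)))
  | q3 {t : Tm} {x : ℕ} {A : Fm} (h : FreeFor t x A) :
      Prov F fpAx (imp (A.subst t x) (ex x A))
  | q4 {x : ℕ} {A B : Fm} (h : x ∉ B.fv) :
      Prov F fpAx (imp (all x (imp A B)) (imp (ex x A) B))
  | jk (s t : Tm) (A B : Fm) :
      Prov F fpAx (imp (just s (imp A B)) (imp (just t A) (just (.app s t) B)))
  | jt (t : Tm) (A : Fm) : Prov F fpAx (imp (just t A) A)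
  | j4 (t : Tm) (A : Fm) :
      Prov F fpAx (imp (just t A) (just (.bang t) (just t A)))
  | sum1 (s t : Tm) (A : Fm) : Prov F fpAx (imp (just s A) (just (.sum s t) A))
  | sum2 (s t : Tm) (A : Fm) : Prov F fpAx (imp (just s A) (just (.sum t s) A))
  | uf {y : ℕ} {t : Tm} {x : ℕ} {A : Fm} (hy1 : y ∉ t.fv) (hy2 : y ∉ A.fv) :
      Prov F fpAx (imp (ex y (just (.var y) (all x (just t A))))
        (just (.uall t x) (all x A)))
  | an {A : Fm} : F A → Prov F fpAx A
  | fp : Prov F fpAx fpAx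
  | mp {A B : Fm} : Prov F fpAx (imp A B) → Prov F fpAx A → Prov F fpAx B
  | gen {A : Fm} (x : ℕ) : Prov F fpAx A → Prov F fpAx (all x A)
  | qnec {x : ℕ} {A : Fm} (h : x ∉ A.fv) :
      Prov F fpAx A → Prov F fpAx (ex x (just (.var x) A))

/-- Admissibility of the Justified Universal Generalization rule in QLP (here
`fpAx := ⊥ → ⊥` plays no role: it is a derivable tautology, so the system is
plain QLP with primitive term specification `F`): if `QLP_F ⊢ t:A`, then
`QLP_F ⊢ (t∀x):(∀x)A`. -/
theorem jug_admissible (F : Fm → Prop) (t : Tm) (x : ℕ) (A : Fm)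
    (h : Prov F (imp bot bot) (just t A)) :
    Prov F (imp bot bot) (just (.uall t x) (all x A)) := by
  obtain ⟨y, hy⟩ := Infinite.exists_notMem_finset (t.fv ∪ A.fv)
  simp only [Finset.mem_union, not_or] at hy
  have h1 : Prov F (imp bot bot) (all x (just t A)) := Prov.gen x h
  have hy3 : y ∉ (all x (just t A)).fv := by
    simp only [Fm.fv, Finset.mem_erase, Finset.mem_union]
    tauto
  have h2 := Prov.qnec hy3 h1
  exact Prov.mp (Prov.uf hy.1 hy.2) h2
end

section
/- In QLP extended with a fixed point constant δ and axiom δ ↔ ¬(∃x)x:δ (and no axiom necessitation, F = ∅), the system is inconsistent: ⊥ is derivable. -/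
open Fm

section Helpers

variable {F : Fm → Prop} {fpAx : Fm}

/-- Identity: ⊢ A → A. -/
lemma prov_id (A : Fm) : Prov F fpAx (imp A A) :=
  .mp (.mp (.ax2 A (imp A A) A) (.ax1 A (imp A A))) (.ax1 A A)

/-- Hypothetical syllogism. -/
lemma prov_hs {A B C : Fm} (h1 : Prov F fpAx (imp A B))
    (h2 : Prov F fpAx (imp B C)) : Prov F fpAx (imp A C) :=
  .mp (.mp (.ax2 A B C) (.mp (.ax1 (imp B C) A) h2)) h1

/-- Assertion: ⊢ A → ((A → C) → C). -/
lemma prov_assert (A C : Fm) : Prov F fpAx (imp A (imp (imp A C) C)) :=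
  prov_hs (.ax1 A (imp A C))
    (.mp (.ax2 (imp A C) A C) (prov_id (imp A C)))

/-- Double negation introduction. -/
lemma prov_dni (A : Fm) : Prov F fpAx (imp A (neg (neg A))) :=
  prov_assert A bot

/-- Ex falso. -/
lemma prov_efq (A : Fm) : Prov F fpAx (imp bot A) :=
  .mp (.ax3 A bot) (.mp (.ax1 (neg bot) (neg A)) (prov_id bot))

/-- Left conjunction elimination. -/
lemma prov_conjL {A B : Fm} (h : Prov F fpAx (conj A B)) : Prov F fpAx A := by
  have negA_imp : Prov F fpAx (imp (neg A) (imp A (neg B))) :=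
    prov_hs (prov_id (neg A))
      (.mp (.ax2 A bot (neg B)) (.mp (.ax1 (imp bot (neg B)) A) (prov_efq (neg B))))
  exact .mp (.mp (.ax3 A (neg (imp A (neg B))))
    (prov_hs negA_imp (prov_dni (imp A (neg B))))) h

/-- Right conjunction elimination. -/
lemma prov_conjR {A B : Fm} (h : Prov F fpAx (conj A B)) : Prov F fpAx B := by
  exact .mp (.mp (.ax3 B (neg (imp A (neg B))))
    (prov_hs (.ax1 (neg B) A) (prov_dni (imp A (neg B))))) h

/-- Contraction. -/
lemma prov_contr {A B : Fm} (h : Prov F fpAx (imp A (imp A B))) :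
    Prov F fpAx (imp A B) :=
  .mp (.mp (.ax2 A A B) h) (prov_id A)

end Helpers

/-- The Knower Paradox in QLP: QLP extended with a fixed point constant `δ` and
the axiom `δ ↔ ¬(∃x)x:δ`, with empty primitive term specification, is
inconsistent. -/
theorem qlp_knower_inconsistent :
    Prov (fun _ => False)
      (iff' delta (neg (ex 0 (just (.var 0) delta)))) bot := by
  set K : Fm := ex 0 (just (.var 0) delta) with hK
  have hfv : (0 : ℕ) ∉ Fm.fv delta := by simp [Fm.fv]
  have h1 : Prov (fun _ => False) (iff' delta (neg K)) (imp delta (neg K)) :=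
    prov_conjL .fp
  have h2 : Prov (fun _ => False) (iff' delta (neg K)) (imp (neg K) delta) :=
    prov_conjR .fp
  have h3 : Prov (fun _ => False) (iff' delta (neg K)) (imp K delta) :=
    .mp (.q4 hfv) (.gen 0 (.jt (.var 0) delta))
  have h5 : Prov (fun _ => False) (iff' delta (neg K)) (neg K) :=
    prov_contr (prov_hs h3 h1)
  have h6 : Prov (fun _ => False) (iff' delta (neg K)) delta := .mp h2 h5
  exact .mp h5 (.qnec hfv h6)
end
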